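/- Fix ε > 0, H > 0 and constants 0 < c_m ≤ c_M. There exists r > 0 depending only on ε, H, c_m, c_M with the following property: for every nondecreasing diffusion coefficient c : [0,H] → ℝ with c_m ≤ c(y) ≤ c_M, every μ > 0 and λ satisfying both λ ≥ (c_M + ε) μ² and λ/c_M − μ² > 1, and every normalized reduced eigenfunction u for (c, μ, λ), one has u(y)² + u'(y)² ≥ r² for all y ∈ [0,H]. -/

import Mathlib

open Set MeasureTheory Filter

/-- `u` (with derivative `u'`) is a reduced eigenfunction for `(c, μ, lam)` on `[0,H]`. -/
def ReducedEigenfunction (H : ℝ) (c : ℝ → ℝ) (μ lam : ℝ) (u u' : ℝ → ℝ) : Prop :=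
  (∀ y ∈ Set.Icc (0:ℝ) H, HasDerivWithinAt u (u' y) (Set.Icc (0:ℝ) H) y) ∧
  ContinuousOn u' (Set.Icc (0:ℝ) H) ∧
  (∀ y ∈ Set.Icc (0:ℝ) H, u' y = u' 0 - ∫ t in (0:ℝ)..y, (lam / c t - μ ^ 2) * u t) ∧
  (∃ y ∈ Set.Icc (0:ℝ) H, u y ≠ 0) ∧
  u 0 = 0 ∧ u H = 0


lemma aux_telescope (ψ q : ℝ → ℝ) (a b C₁ C₂ : ℝ) (hab : a ≤ b)
    (hC₁ : 0 ≤ C₁) (hC₂ : 0 ≤ C₂) (hqab : q b ≤ q a)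
    (hstep : ∀ s t : ℝ, a ≤ s → s ≤ t → t ≤ b →
      ψ s - ψ t ≤ (t - s) * (C₁ * (t - s) + C₂ * (q s - q t))) :
    ψ a ≤ ψ b := by
  set K : ℝ := (b - a) * (C₁ * (b - a) + C₂ * (q a - q b)) with hK
  have hK0 : 0 ≤ K := by
    apply mul_nonneg (by linarith)
    have : 0 ≤ C₂ * (q a - q b) := mul_nonneg hC₂ (by linarith)
    nlinarith
  have key : ∀ n : ℕ, 1 ≤ n → ψ a - ψ b ≤ K / n := by
    intro n hn
    have hn0 : (0:ℝ) < n := by exact_mod_cast hn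
    set δ : ℝ := (b - a) / n with hδ
    have hδ0 : 0 ≤ δ := div_nonneg (by linarith) hn0.le
    set f : ℕ → ℝ := fun i => a + i * δ with hf
    have hmono : ∀ i j : ℕ, i ≤ j → f i ≤ f j := by
      intro i j hij
      simp only [hf]
      have : (i:ℝ) ≤ j := by exact_mod_cast hij
      nlinarith
    have hfn : f n = b := by
      simp only [hf, hδ]
      field_simp
      ring
    have hfb : ∀ i : ℕ, i ≤ n → f i ≤ b := by
      intro i hi; rw [← hfn]; exact hmono i n hi
    have hfa : ∀ i : ℕ, a ≤ f i := by
      intro i; simp only [hf]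
      nlinarith [hδ0, (Nat.cast_nonneg i : (0:ℝ) ≤ i)]
    have htel : ψ a - ψ b = ∑ i ∈ Finset.range n, (ψ (f i) - ψ (f (i+1))) := by
      rw [Finset.sum_range_sub' (fun i => ψ (f i))]
      have hf0 : f 0 = a := by simp [hf]
      rw [hf0, hfn]
    have hdiff : ∀ i : ℕ, f (i+1) - f i = δ := by
      intro i; simp only [hf]; push_cast; ring
    have hbound : ∀ i ∈ Finset.range n, ψ (f i) - ψ (f (i+1)) ≤
        δ * (C₁ * δ + C₂ * (q (f i) - q (f (i+1)))) := by
      intro i hi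
      have hi' : i + 1 ≤ n := Finset.mem_range.mp hi
      have := hstep (f i) (f (i+1)) (hfa i) (hmono i (i+1) (by omega)) (hfb (i+1) hi')
      rwa [hdiff i] at this
    calc ψ a - ψ b ≤ ∑ i ∈ Finset.range n, δ * (C₁ * δ + C₂ * (q (f i) - q (f (i+1)))) := by
          rw [htel]; exact Finset.sum_le_sum hbound
      _ = n * (δ * (C₁ * δ)) + δ * C₂ * (q (f 0) - q (f n)) := by
          simp only [mul_add, Finset.sum_add_distrib, Finset.sum_const, Finset.card_range,
            nsmul_eq_mul, ← Finset.mul_sum, Finset.sum_range_sub' (fun i => q (f i))]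
          ring
      _ = K / n := by
          rw [hfn]
          have hf0 : f 0 = a := by simp [hf]
          rw [hf0, hK, hδ]
          field_simp
  have hlim : Tendsto (fun n : ℕ => K / n) atTop (nhds 0) :=
    tendsto_const_div_atTop_nhds_zero_nat K
  have : ψ a - ψ b ≤ 0 := by
    refine ge_of_tendsto hlim ?_
    filter_upwards [eventually_ge_atTop 1] with n hn using key n hn
  linarith

set_option maxHeartbeats 1000000 in
/-- Minimal amplitude property, uniformly over nondecreasing diffusion coefficients. -/
theorem stmt10
    (ε H c_m c_M : ℝ)
    (hε : 0 < ε) (hH : 0 < H) (hcm : 0 < c_m) (hcmM : c_m ≤ c_M) :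
    ∃ r : ℝ, 0 < r ∧
      ∀ (c u u' : ℝ → ℝ) (μ lam : ℝ),
        Measurable c → (∀ y ∈ Set.Icc (0:ℝ) H, c_m ≤ c y ∧ c y ≤ c_M) →
        MonotoneOn c (Set.Icc (0:ℝ) H) →
        0 < μ → (c_M + ε) * μ ^ 2 ≤ lam → 1 < lam / c_M - μ ^ 2 →
        ReducedEigenfunction H c μ lam u u' →
        (∫ y in (0:ℝ)..H, (u y) ^ 2 / c y) = 1 →
        ∀ y ∈ Set.Icc (0:ℝ) H, r ^ 2 ≤ (u y) ^ 2 + (u' y) ^ 2 := by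
  refine ⟨Real.sqrt (ε * c_m ^ 2 / (H * c_M * (c_M + ε))), ?_, ?_⟩
  · apply Real.sqrt_pos.mpr
    have hcM : 0 < c_M := lt_of_lt_of_le hcm hcmM
    positivity
  intro c u u' μ lam hc hcb hmono hμ hlam1 hlam2 hred hnorm
  obtain ⟨hu_deriv, hu'_cont, heq, -, hu0, -⟩ := hred
  have hrsq : Real.sqrt (ε * c_m ^ 2 / (H * c_M * (c_M + ε))) ^ 2 =
      ε * c_m ^ 2 / (H * c_M * (c_M + ε)) := by
    apply Real.sq_sqrt
    have hcM : 0 < c_M := lt_of_lt_of_le hcm hcmM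
    positivity
  rw [hrsq]
  have key : ∀ y ∈ Set.Icc (0:ℝ) H, ε * c_m ^ 2 / (H * c_M * (c_M + ε)) ≤ (u y) ^ 2 + (u' y) ^ 2 := by
    set q : ℝ → ℝ := fun y => lam / c y - μ ^ 2 with hq_def
    set g : ℝ → ℝ := fun t => (lam / c t - μ ^ 2) * u t with hg_def
    have hcM : 0 < c_M := lt_of_lt_of_le hcm hcmM
    have hlam : 0 < lam := lt_of_lt_of_le (by positivity) hlam1
    set qlo : ℝ := lam / c_M - μ ^ 2 with hqlo_def
    set Q : ℝ := lam / c_m with hQ_def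
    have hQ1 : 1 < Q := by
      have : qlo ≤ Q := by
        have : lam / c_M ≤ lam / c_m := div_le_div_of_nonneg_left hlam.le hcm hcmM
        simp only [hqlo_def, hQ_def]; nlinarith
      linarith
    have hq_lb : ∀ y ∈ Icc (0:ℝ) H, qlo ≤ q y := by
      intro y hy
      obtain ⟨h1, h2⟩ := hcb y hy
      have : lam / c_M ≤ lam / c y := div_le_div_of_nonneg_left hlam.le (lt_of_lt_of_le hcm h1) h2
      simp only [hq_def, hqlo_def]; linarith
    have hq_ub : ∀ y ∈ Icc (0:ℝ) H, q y ≤ Q := by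
      intro y hy
      obtain ⟨h1, h2⟩ := hcb y hy
      have : lam / c y ≤ lam / c_m := div_le_div_of_nonneg_left hlam.le hcm h1
      simp only [hq_def, hQ_def]; nlinarith
    have hq1 : ∀ y ∈ Icc (0:ℝ) H, 1 ≤ q y := fun y hy => le_trans hlam2.le (hq_lb y hy)
    have hq_anti : ∀ s ∈ Icc (0:ℝ) H, ∀ t ∈ Icc (0:ℝ) H, s ≤ t → q t ≤ q s := by
      intro s hs t ht hst
      have h1 := (hcb s hs).1
      have := hmono hs ht hst
      have : lam / c t ≤ lam / c s := div_le_div_of_nonneg_left hlam.le (lt_of_lt_of_le hcm h1) this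
      simp only [hq_def]; linarith
    have hu_cont : ContinuousOn u (Icc (0:ℝ) H) := fun y hy => (hu_deriv y hy).continuousWithinAt
    obtain ⟨M, hM⟩ := isCompact_Icc.exists_bound_of_continuousOn hu_cont
    obtain ⟨M', hM'⟩ := isCompact_Icc.exists_bound_of_continuousOn hu'_cont
    have hM0 : 0 ≤ M := le_trans (norm_nonneg _) (hM 0 ⟨le_refl _, hH.le⟩)
    have hM'0 : 0 ≤ M' := le_trans (norm_nonneg _) (hM' 0 ⟨le_refl _, hH.le⟩)
    -- measurability
    have hq_meas : Measurable q := (measurable_const.div hc).sub measurable_const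
    have hu_meas : AEStronglyMeasurable u (volume.restrict (Icc (0:ℝ) H)) :=
      hu_cont.aestronglyMeasurable measurableSet_Icc
    have hg_meas : AEStronglyMeasurable g (volume.restrict (Icc (0:ℝ) H)) := by
      exact (hq_meas.aestronglyMeasurable).mul hu_meas
    have hsub : ∀ s ∈ Icc (0:ℝ) H, ∀ t ∈ Icc (0:ℝ) H, Set.uIoc s t ⊆ Icc (0:ℝ) H := by
      intro s hs t ht
      refine subset_trans Ioc_subset_Icc_self (Icc_subset_Icc (le_min hs.1 ht.1) (max_le hs.2 ht.2))
    have hg_int : ∀ s ∈ Icc (0:ℝ) H, ∀ t ∈ Icc (0:ℝ) H, IntervalIntegrable g volume s t := by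
      intro s hs t ht
      rw [intervalIntegrable_iff]
      refine ⟨hg_meas.mono_measure (Measure.restrict_mono (hsub s hs t ht) le_rfl), ?_⟩
      refine HasFiniteIntegral.restrict_of_bounded (C := Q * M) measure_Ioc_lt_top ?_
      filter_upwards [ae_restrict_mem measurableSet_uIoc] with y hy
      have hy' := hsub s hs t ht hy
      have h1 : |q y| ≤ Q := abs_le.mpr ⟨by linarith [hq1 y hy'], hq_ub y hy'⟩
      calc ‖g y‖ = |q y| * ‖u y‖ := by simp [hg_def, hq_def, abs_mul]
        _ ≤ Q * M := mul_le_mul h1 (hM y hy') (norm_nonneg _) (by linarith)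
    have hu'_diff : ∀ s ∈ Icc (0:ℝ) H, ∀ t ∈ Icc (0:ℝ) H,
        u' t - u' s = -∫ y in s..t, g y := by
      intro s hs t ht
      have h0 : (0:ℝ) ∈ Icc (0:ℝ) H := ⟨le_refl _, hH.le⟩
      have hadd := intervalIntegral.integral_add_adjacent_intervals
        (hg_int 0 h0 s hs) (hg_int s hs t ht)
      rw [heq t ht, heq s hs]
      simp only [hg_def] at hadd ⊢
      linarith
    have hLip : ∀ s ∈ Icc (0:ℝ) H, ∀ t ∈ Icc (0:ℝ) H, |u' t - u' s| ≤ Q * M * |t - s| := by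
      intro s hs t ht
      rw [hu'_diff s hs t ht, abs_neg, ← Real.norm_eq_abs]
      apply intervalIntegral.norm_integral_le_of_norm_le_const
      intro y hy
      have hy' := hsub s hs t ht hy
      have h1 : |q y| ≤ Q := abs_le.mpr ⟨by linarith [hq1 y hy'], hq_ub y hy'⟩
      calc ‖g y‖ = |q y| * ‖u y‖ := by simp [hg_def, hq_def, abs_mul]
        _ ≤ Q * M := mul_le_mul h1 (hM y hy') (norm_nonneg _) (by linarith)
    have hsq : ∀ s t : ℝ, 0 ≤ s → s ≤ t → t ≤ H →
        (∫ y in s..t, 2 * u y * u' y) = u t ^ 2 - u s ^ 2 := by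
      intro s t h0s hst htH
      have hs : s ∈ Icc (0:ℝ) H := ⟨h0s, le_trans hst htH⟩
      have ht : t ∈ Icc (0:ℝ) H := ⟨le_trans h0s hst, htH⟩
      refine intervalIntegral.integral_eq_sub_of_hasDeriv_right_of_le hst
        (f := fun y => u y ^ 2) (f' := fun y => 2 * u y * u' y) ?_ ?_ ?_
      · exact (hu_cont.mono (Icc_subset_Icc h0s htH)).pow 2
      · intro x hx
        have hx' : x ∈ Ioo (0:ℝ) H := ⟨lt_of_le_of_lt h0s hx.1, lt_of_lt_of_le hx.2 htH⟩
        have hd : HasDerivAt u (u' x) x :=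
          (hu_deriv x ⟨hx'.1.le, hx'.2.le⟩).hasDerivAt (Icc_mem_nhds hx'.1 hx'.2)
        have : HasDerivAt (fun y => u y ^ 2) (2 * u x * u' x) x := by
          have := hd.pow 2
          exact this.congr_deriv (by norm_num)
        exact this.hasDerivWithinAt
      · apply ContinuousOn.intervalIntegrable
        have hsubI : uIcc s t ⊆ Icc (0:ℝ) H := by
          rw [uIcc_of_le hst]; exact Icc_subset_Icc h0s htH
        exact ((continuousOn_const.mul (hu_cont.mono hsubI)).mul (hu'_cont.mono hsubI))
    set C₁ : ℝ := 2 * M^2 * Q^2 with hC₁_def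
    set C₂ : ℝ := 2 * M * M' with hC₂_def
    have hC₁ : 0 ≤ C₁ := by positivity
    have hC₂ : 0 ≤ C₂ := by positivity
    -- the key identity and bound for one step
    have hkey : ∀ s t : ℝ, 0 ≤ s → s ≤ t → t ≤ H →
        q t * (u t ^ 2 - u s ^ 2) + (u' t ^ 2 - u' s ^ 2) =
          ∫ y in s..t, (q t * (2 * u y * u' y) - g y * (u' t + u' s)) := by
      intro s t h0s hst htH
      have hs : s ∈ Icc (0:ℝ) H := ⟨h0s, le_trans hst htH⟩
      have ht : t ∈ Icc (0:ℝ) H := ⟨le_trans h0s hst, htH⟩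
      have hsubI : uIcc s t ⊆ Icc (0:ℝ) H := by
        rw [uIcc_of_le hst]; exact Icc_subset_Icc h0s htH
      have hint1 : IntervalIntegrable (fun y => q t * (2 * u y * u' y)) volume s t := by
        apply ContinuousOn.intervalIntegrable
        exact continuousOn_const.mul ((continuousOn_const.mul (hu_cont.mono hsubI)).mul
          (hu'_cont.mono hsubI))
      have hint2 : IntervalIntegrable (fun y => g y * (u' t + u' s)) volume s t :=
        (hg_int s hs t ht).mul_const _
      rw [intervalIntegral.integral_sub hint1 hint2, intervalIntegral.integral_const_mul,
        intervalIntegral.integral_mul_const, hsq s t h0s hst htH]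
      have h2 : u' t ^ 2 - u' s ^ 2 = (u' t - u' s) * (u' t + u' s) := by ring
      rw [h2, hu'_diff s hs t ht]
      ring
    have hIb : ∀ s t : ℝ, 0 ≤ s → s ≤ t → t ≤ H →
        |∫ y in s..t, (q t * (2 * u y * u' y) - g y * (u' t + u' s))| ≤
          (t - s) * (C₁ * (t - s) + C₂ * (q s - q t)) := by
      intro s t h0s hst htH
      have hs : s ∈ Icc (0:ℝ) H := ⟨h0s, le_trans hst htH⟩
      have ht : t ∈ Icc (0:ℝ) H := ⟨le_trans h0s hst, htH⟩
      have habs : |t - s| = t - s := abs_of_nonneg (by linarith)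
      have hB : |∫ y in s..t, (q t * (2 * u y * u' y) - g y * (u' t + u' s))| ≤
          (M * (Q * (Q * M * (t - s)) + Q * (Q * M * (t - s)) + (q s - q t) * (2 * M'))) * |t - s| := by
        rw [← Real.norm_eq_abs]
        apply intervalIntegral.norm_integral_le_of_norm_le_const
        intro y hy
        rw [uIoc_of_le hst] at hy
        have hy' : y ∈ Icc (0:ℝ) H := ⟨le_trans h0s hy.1.le, le_trans hy.2 htH⟩
        have hyt : |u' y - u' t| ≤ Q * M * (t - s) := by
          have := hLip t ht y hy'
          have habs2 : |y - t| ≤ t - s := by rw [abs_sub_comm, abs_of_nonneg (by linarith [hy.2])]; linarith [hy.1]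
          nlinarith [abs_nonneg (u' y - u' t), mul_le_mul_of_nonneg_left habs2 (by positivity : (0:ℝ) ≤ Q * M)]
        have hys : |u' y - u' s| ≤ Q * M * (t - s) := by
          have := hLip s hs y hy'
          have habs2 : |y - s| ≤ t - s := by rw [abs_of_nonneg (by linarith [hy.1.le])]; linarith [hy.2]
          nlinarith [abs_nonneg (u' y - u' s), mul_le_mul_of_nonneg_left habs2 (by positivity : (0:ℝ) ≤ Q * M)]
        have hqy1 : q t ≤ q y := hq_anti y hy' t ht hy.2
        have hqy2 : q y ≤ q s := hq_anti s hs y hy' hy.1.le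
        have hqtq : |q y - q t| ≤ q s - q t := by rw [abs_of_nonneg (by linarith)]; linarith
        have hqtQ : |q t| ≤ Q := abs_le.mpr ⟨by linarith [hq1 t ht], hq_ub t ht⟩
        have hsum : |u' t + u' s| ≤ 2 * M' := by
          calc |u' t + u' s| ≤ |u' t| + |u' s| := abs_add_le _ _
            _ ≤ 2 * M' := by
                have h1 := hM' t ht; have h2 := hM' s hs
                rw [Real.norm_eq_abs] at h1 h2; linarith
        have e2 : q t * (2 * u y * u' y) - g y * (u' t + u' s) =
            u y * (q t * (u' y - u' t) + q t * (u' y - u' s) + (q t - q y) * (u' t + u' s)) := by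
          simp only [hg_def, hq_def]; ring
        rw [Real.norm_eq_abs, e2, abs_mul]
        have hinner : |q t * (u' y - u' t) + q t * (u' y - u' s) + (q t - q y) * (u' t + u' s)| ≤
            Q * (Q * M * (t - s)) + Q * (Q * M * (t - s)) + (q s - q t) * (2 * M') := by
          refine le_trans (abs_add_three _ _ _) ?_
          have hA : |q t * (u' y - u' t)| ≤ Q * (Q * M * (t - s)) := by
            rw [abs_mul]; exact mul_le_mul hqtQ hyt (abs_nonneg _) (by linarith)
          have hB : |q t * (u' y - u' s)| ≤ Q * (Q * M * (t - s)) := by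
            rw [abs_mul]; exact mul_le_mul hqtQ hys (abs_nonneg _) (by linarith)
          have hC : |(q t - q y) * (u' t + u' s)| ≤ (q s - q t) * (2 * M') := by
            rw [abs_mul, abs_sub_comm]
            exact mul_le_mul hqtq hsum (abs_nonneg _) (by linarith [hq1 t ht, hq_anti s hs t ht hst])
          linarith
        have hMy : |u y| ≤ M := by have := hM y hy'; rwa [Real.norm_eq_abs] at this
        exact mul_le_mul hMy hinner (abs_nonneg _) hM0
      rw [habs] at hB
      refine le_trans hB (le_of_eq ?_)
      simp only [hC₁_def, hC₂_def]; ring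
    -- step inequalities
    have hstepE : ∀ s t : ℝ, 0 ≤ s → s ≤ t → t ≤ H →
        (q t * u t ^ 2 + u' t ^ 2) - (q s * u s ^ 2 + u' s ^ 2) ≤
          (t - s) * (C₁ * (t - s) + C₂ * (q s - q t)) := by
      intro s t h0s hst htH
      have hs : s ∈ Icc (0:ℝ) H := ⟨h0s, le_trans hst htH⟩
      have ht : t ∈ Icc (0:ℝ) H := ⟨le_trans h0s hst, htH⟩
      have hqts : q t ≤ q s := hq_anti s hs t ht hst
      have h1 : (q t * u t ^ 2 + u' t ^ 2) - (q s * u s ^ 2 + u' s ^ 2) ≤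
          q t * (u t ^ 2 - u s ^ 2) + (u' t ^ 2 - u' s ^ 2) := by nlinarith [sq_nonneg (u s)]
      refine le_trans h1 ?_
      rw [hkey s t h0s hst htH]
      exact le_trans (le_abs_self _) (hIb s t h0s hst htH)
    have hstepP : ∀ s t : ℝ, 0 ≤ s → s ≤ t → t ≤ H →
        (u s ^ 2 + u' s ^ 2 / q s) - (u t ^ 2 + u' t ^ 2 / q t) ≤
          (t - s) * (C₁ * (t - s) + C₂ * (q s - q t)) := by
      intro s t h0s hst htH
      have hs : s ∈ Icc (0:ℝ) H := ⟨h0s, le_trans hst htH⟩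
      have ht : t ∈ Icc (0:ℝ) H := ⟨le_trans h0s hst, htH⟩
      have hqts : q t ≤ q s := hq_anti s hs t ht hst
      have hqt1 : 1 ≤ q t := hq1 t ht
      have hqt0 : 0 < q t := by linarith
      have h1 : u' s ^ 2 / q s ≤ u' s ^ 2 / q t :=
        div_le_div_of_nonneg_left (sq_nonneg _) hqt0 hqts
      set I : ℝ := ∫ y in s..t, (q t * (2 * u y * u' y) - g y * (u' t + u' s)) with hI_def
      set bnd : ℝ := (t - s) * (C₁ * (t - s) + C₂ * (q s - q t)) with hbnd_def
      have hIb' : |I| ≤ bnd := hIb s t h0s hst htH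
      have hbnd0 : 0 ≤ bnd := le_trans (abs_nonneg _) hIb'
      have h2 : (u t ^ 2 - u s ^ 2) + (u' t ^ 2 - u' s ^ 2) / q t = I / q t := by
        rw [hI_def, ← hkey s t h0s hst htH]
        field_simp
      have h3 : -bnd ≤ I / q t := by
        rw [le_div_iff₀ hqt0]
        nlinarith [neg_abs_le I]
      have h4 : (u t ^ 2 - u s ^ 2) + (u' t ^ 2 - u' s ^ 2) / q t ≥ -bnd := by rw [h2]; exact h3
      have h5 : (u' t ^ 2 - u' s ^ 2) / q t = u' t ^ 2 / q t - u' s ^ 2 / q t := by ring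
      rw [h5] at h4
      linarith
    have h0I : (0:ℝ) ∈ Icc (0:ℝ) H := ⟨le_refl _, hH.le⟩
    have hE : ∀ y ∈ Icc (0:ℝ) H, q y * u y ^ 2 + u' y ^ 2 ≤ u' 0 ^ 2 := by
      intro y hy
      have := aux_telescope (fun z => -(q z * u z ^ 2 + u' z ^ 2)) q 0 y C₁ C₂ hy.1 hC₁ hC₂
        (hq_anti 0 h0I y hy hy.1)
        (fun s t h0s hst hty => by
          have := hstepE s t h0s hst (le_trans hty hy.2)
          linarith)
      have h00 : q 0 * u 0 ^ 2 + u' 0 ^ 2 = u' 0 ^ 2 := by rw [hu0]; ring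
      linarith
    have hP : ∀ y ∈ Icc (0:ℝ) H, u' 0 ^ 2 / q 0 ≤ u y ^ 2 + u' y ^ 2 / q y := by
      intro y hy
      have := aux_telescope (fun z => u z ^ 2 + u' z ^ 2 / q z) q 0 y C₁ C₂ hy.1 hC₁ hC₂
        (hq_anti 0 h0I y hy hy.1)
        (fun s t h0s hst hty => hstepP s t h0s hst (le_trans hty hy.2))
      have h00 : u 0 ^ 2 + u' 0 ^ 2 / q 0 = u' 0 ^ 2 / q 0 := by rw [hu0]; ring
      linarith
    have hqlo0 : 0 < qlo := by linarith
    have husq : ∀ y ∈ Icc (0:ℝ) H, u y ^ 2 ≤ u' 0 ^ 2 / qlo := by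
      intro y hy
      rw [le_div_iff₀ hqlo0]
      nlinarith [hE y hy, hq_lb y hy, sq_nonneg (u y), sq_nonneg (u' y)]
    -- normalization gives a lower bound on u' 0
    have hint_lhs : IntervalIntegrable (fun y => u y ^ 2 / c y) volume 0 H := by
      rw [intervalIntegrable_iff]
      have hsub0 : Set.uIoc (0:ℝ) H ⊆ Icc (0:ℝ) H := hsub 0 h0I H ⟨hH.le, le_refl _⟩
      constructor
      · have hm : AEStronglyMeasurable (fun y => u y ^ 2 / c y) (volume.restrict (Icc (0:ℝ) H)) := by
          have he : (fun y => u y ^ 2 / c y) = fun y => u y * u y * (c y)⁻¹ := by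
            funext z; rw [sq, div_eq_mul_inv]
          rw [he]
          exact (hu_meas.mul hu_meas).mul (hc.inv.aestronglyMeasurable)
        exact hm.mono_measure (Measure.restrict_mono hsub0 le_rfl)
      · refine HasFiniteIntegral.restrict_of_bounded (C := M ^ 2 / c_m) measure_Ioc_lt_top ?_
        filter_upwards [ae_restrict_mem measurableSet_uIoc] with y hy
        have hy' := hsub0 hy
        obtain ⟨h1, h2⟩ := hcb y hy'
        have hcy : 0 < c y := lt_of_lt_of_le hcm h1
        have husq' : u y ^ 2 ≤ M ^ 2 := by
          have := hM y hy'; rw [Real.norm_eq_abs] at this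
          nlinarith [abs_nonneg (u y), sq_abs (u y)]
        rw [Real.norm_eq_abs, abs_of_nonneg (by positivity)]
        exact div_le_div₀ (by positivity) husq' hcm h1
    have hpt : ∀ y ∈ Icc (0:ℝ) H, u y ^ 2 / c y ≤ u' 0 ^ 2 / qlo / c_m := by
      intro y hy
      obtain ⟨h1, h2⟩ := hcb y hy
      exact div_le_div₀ (by positivity) (husq y hy) hcm h1
    have hub : (1:ℝ) ≤ H * (u' 0 ^ 2 / qlo / c_m) := by
      rw [← hnorm]
      calc (∫ y in (0:ℝ)..H, u y ^ 2 / c y) ≤ ∫ _y in (0:ℝ)..H, (u' 0 ^ 2 / qlo / c_m) :=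
            intervalIntegral.integral_mono_on hH.le hint_lhs intervalIntegrable_const hpt
        _ = H * (u' 0 ^ 2 / qlo / c_m) := by
            rw [intervalIntegral.integral_const]; simp [smul_eq_mul]
    have hu'0 : qlo * c_m ≤ H * u' 0 ^ 2 := by
      have hq0 : (0:ℝ) < qlo * c_m := by positivity
      have h' : (1:ℝ) ≤ (H * u' 0 ^ 2) / (qlo * c_m) := by
        have he : H * (u' 0 ^ 2 / qlo / c_m) = (H * u' 0 ^ 2) / (qlo * c_m) := by
          field_simp
        linarith [hub, he.symm.le, he.le]
      exact (one_le_div hq0).mp h'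
    -- final chain
    intro y hy
    have hq00 : q 0 ≤ Q := hq_ub 0 h0I
    have hq0pos : 0 < q 0 := by linarith [hq1 0 h0I]
    have hQpos : (0:ℝ) < Q := by linarith
    have step1 : u' 0 ^ 2 / Q ≤ u' 0 ^ 2 / q 0 := div_le_div_of_nonneg_left (sq_nonneg _) hq0pos hq00
    have step2 : u' 0 ^ 2 / q 0 ≤ u y ^ 2 + u' y ^ 2 / q y := hP y hy
    have step3 : u' y ^ 2 / q y ≤ u' y ^ 2 := div_le_self (sq_nonneg _) (hq1 y hy)
    have step4 : qlo * c_m ^ 2 / (H * lam) ≤ u' 0 ^ 2 / Q := by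
      rw [div_le_div_iff₀ (by positivity) hQpos, hQ_def]
      have he : qlo * c_m ^ 2 * (lam / c_m) = qlo * c_m * lam := by field_simp
      rw [he]
      nlinarith [hu'0, hlam]
    have step5 : ε * c_m ^ 2 / (H * c_M * (c_M + ε)) ≤ qlo * c_m ^ 2 / (H * lam) := by
      rw [div_le_div_iff₀ (by positivity) (by positivity)]
      have hqc : qlo * c_M = lam - μ ^ 2 * c_M := by rw [hqlo_def]; field_simp
      have key2 : 0 ≤ H * c_m ^ 2 * (c_M * (lam - (c_M + ε) * μ ^ 2)) := by
        apply mul_nonneg (by positivity)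
        exact mul_nonneg hcM.le (by linarith)
      have h6 : qlo * c_m ^ 2 * (H * c_M * (c_M + ε)) = c_m ^ 2 * H * (c_M + ε) * (qlo * c_M) := by
        ring
      rw [hqc] at h6
      nlinarith [h6, key2]
    linarith
  exact key
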